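/- Let $E_i$ ($i \geq m$) be independent exponential random variables where $E_i$ has rate $4i$, and let $T > 0$ be fixed. Then for every $c' > 0$ there exists $n_0$ such that for all $n \geq n_0$ and $m = \lfloor n^r/2 \rfloor$ (with fixed $r \in (1/2, 1)$): $\mathbb{P}\Big(\sum_{i=m}^{n} E_i < T\Big) \leq \exp(-c\, n^r)$ for some constant $c > 0$ depending only on $T$ and $r$. -/

import Mathlib

open MeasureTheory ProbabilityTheory Real

open Set
open scoped ENNReal

lemma exp_integral_Ioi {b : ℝ} (hb : 0 < b) :
    ∫ x in Ioi (0:ℝ), Real.exp (-(b * x)) = 1 / b := by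
  have := integral_rpow_mul_exp_neg_mul_Ioi (a := 1) zero_lt_one hb
  simpa [Real.rpow_natCast, Real.Gamma_one] using this

lemma lint_exp {ρ s : ℝ} (hρ : 0 < ρ) (hs : 0 ≤ s) :
    ∫⁻ x, ENNReal.ofReal (Real.exp (-s * x)) ∂(expMeasure ρ)
      = ENNReal.ofReal (ρ / (ρ + s)) := by
  have hmeas : expMeasure ρ = volume.withDensity (exponentialPDF ρ) := rfl
  set F : ℝ → ℝ≥0∞ :=
    fun x => exponentialPDF ρ x * ENNReal.ofReal (Real.exp (-s * x)) with hF
  have hFeq : ∫⁻ x, ENNReal.ofReal (Real.exp (-s * x)) ∂(expMeasure ρ)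
      = ∫⁻ x, F x := by
    rw [hmeas, lintegral_withDensity_eq_lintegral_mul _ (by
      exact (measurable_exponentialPDFReal ρ).ennreal_ofReal)
      (by exact ((measurable_id.const_mul (-s)).exp).ennreal_ofReal)]
    rfl
  rw [hFeq, ← lintegral_add_compl F (measurableSet_Iio (a := (0:ℝ))), compl_Iio]
  have h1 : ∫⁻ x in Iio (0:ℝ), F x = 0 := by
    rw [setLIntegral_congr_fun measurableSet_Iio
      (fun x (hx : x < 0) =>
        show F x = (fun _ => (0:ℝ≥0∞)) x by
          simp [hF, exponentialPDF_of_neg hx])]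
    simp
  have h2 : ∫⁻ x in Ici (0:ℝ), F x = ENNReal.ofReal (ρ / (ρ + s)) := by
    rw [setLIntegral_congr_fun measurableSet_Ici
      (fun x (hx : 0 ≤ x) =>
        show F x = (fun y => ENNReal.ofReal (ρ * Real.exp (-((ρ + s) * y)))) x by
          rw [hF]
          show exponentialPDF ρ x * ENNReal.ofReal (Real.exp (-s * x)) = _
          rw [exponentialPDF_of_nonneg hx, ← ENNReal.ofReal_mul (by positivity)]
          congr 1
          rw [mul_assoc, ← Real.exp_add]
          ring_nf)]
    have hint : IntegrableOn (fun y => ρ * Real.exp (-((ρ + s) * y))) (Ici (0:ℝ)) := by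
      rw [integrableOn_Ici_iff_integrableOn_Ioi]
      have := (exp_neg_integrableOn_Ioi 0 (show (0:ℝ) < ρ + s by linarith)).const_mul ρ
      exact this.congr (ae_of_all _ (fun x => by ring_nf))
    rw [← ofReal_integral_eq_lintegral_ofReal hint
      (ae_of_all _ (fun x => by positivity))]
    congr 1
    rw [integral_Ici_eq_integral_Ioi, MeasureTheory.integral_const_mul,
      exp_integral_Ioi (show (0:ℝ) < ρ + s by linarith)]
    field_simp
  rw [h1, h2, zero_add]

lemma ae_nonneg_of_expMeasure {Ω : Type*} [MeasurableSpace Ω] (μ : Measure Ω)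
    (X : Ω → ℝ) (hX : Measurable X) {ρ : ℝ}
    (hlaw : μ.map X = expMeasure ρ) : ∀ᵐ ω ∂μ, 0 ≤ X ω := by
  have h0 : μ (X ⁻¹' Iio 0) = 0 := by
    rw [← Measure.map_apply hX measurableSet_Iio, hlaw]
    show (volume.withDensity (exponentialPDF ρ)) (Iio 0) = 0
    rw [withDensity_apply _ measurableSet_Iio]
    exact lintegral_exponentialPDF_of_nonpos le_rfl
  refine (ae_iff.2 ?_)
  simp only [not_le]
  exact h0

lemma integrable_exp_neg {Ω : Type*} [MeasurableSpace Ω] (μ : Measure Ω)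
    [IsProbabilityMeasure μ] (X : Ω → ℝ) (hX : Measurable X) {s : ℝ} (hs : 0 ≤ s)
    (hae : ∀ᵐ ω ∂μ, 0 ≤ X ω) :
    Integrable (fun ω => Real.exp (-s * X ω)) μ := by
  refine Integrable.mono' (integrable_const 1)
    ((hX.const_mul (-s)).exp).aestronglyMeasurable ?_
  filter_upwards [hae] with ω hω
  rw [Real.norm_eq_abs, abs_of_pos (Real.exp_pos _)]
  exact Real.exp_le_one_iff.2 (by nlinarith)

lemma mgf_expMeasure {Ω : Type*} [MeasurableSpace Ω] (μ : Measure Ω)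
    [IsProbabilityMeasure μ] (X : Ω → ℝ) (hX : Measurable X) {ρ s : ℝ}
    (hρ : 0 < ρ) (hs : 0 ≤ s) (hlaw : μ.map X = expMeasure ρ) :
    mgf X μ (-s) = ρ / (ρ + s) := by
  have h1 : mgf X μ (-s) = ∫ ω, Real.exp (-s * X ω) ∂μ := rfl
  rw [h1, integral_eq_lintegral_of_nonneg_ae
    (ae_of_all _ (fun ω => (Real.exp_pos _).le))
    ((hX.const_mul (-s)).exp).aestronglyMeasurable]
  have h2 : ∫⁻ ω, ENNReal.ofReal (Real.exp (-s * X ω)) ∂μ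
      = ∫⁻ x, ENNReal.ofReal (Real.exp (-s * x)) ∂(μ.map X) := by
    exact (lintegral_map ((measurable_const_mul (-s)).exp.ennreal_ofReal) hX).symm
  rw [h2, hlaw, lint_exp hρ hs, ENNReal.toReal_ofReal (by positivity)]

lemma harmonic_lb (m : ℕ) (hm : 1 ≤ m) : ∀ n : ℕ, m ≤ n →
    Real.log (n + 1) - Real.log m ≤ ∑ i ∈ Finset.Icc m n, (1 : ℝ) / i := by
  have key : ∀ k : ℕ, 1 ≤ k → Real.log (k + 1) - Real.log k ≤ 1 / (k : ℝ) := by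
    intro k hk
    have hk0 : (0:ℝ) < k := by exact_mod_cast hk
    have : Real.log ((k + 1 : ℝ) / k) ≤ (k + 1 : ℝ) / k - 1 :=
      Real.log_le_sub_one_of_pos (by positivity)
    rw [Real.log_div (by positivity) (by positivity)] at this
    have h2 : (k + 1 : ℝ) / k - 1 = 1 / k := by field_simp; ring
    linarith [h2 ▸ this]
  intro n
  induction n with
  | zero => intro h; omega
  | succ n ih =>
    intro hmn
    rcases Nat.lt_or_ge n m with h | h
    · have : m = n + 1 := by omega
      subst this
      simp only [Finset.Icc_self, Finset.sum_singleton]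
      have := key (n + 1) (by omega)
      push_cast at this ⊢
      linarith
    · have hstep := key (n + 1) (by omega)
      rw [Finset.sum_Icc_succ_top (by omega)]
      have := ih h
      push_cast at hstep this ⊢
      linarith

lemma ratio_le_exp {a s : ℝ} (ha : 0 < a) (hs : 0 ≤ s) (hsa : s ≤ a) :
    a / (a + s) ≤ Real.exp (-(s / (2 * a))) := by
  have has : 0 < a + s := by linarith
  have hlog : Real.log (a / (a + s)) ≤ a / (a + s) - 1 :=
    Real.log_le_sub_one_of_pos (by positivity)
  have h2 : a / (a + s) - 1 = -(s / (a + s)) := by field_simp; ring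
  have h3 : s / (2 * a) ≤ s / (a + s) := by
    apply div_le_div_of_nonneg_left hs has (by linarith)
  calc a / (a + s) = Real.exp (Real.log (a / (a + s))) :=
        (Real.exp_log (by positivity)).symm
    _ ≤ Real.exp (-(s / (2 * a))) := by
        apply Real.exp_le_exp.2
        linarith

/-- Annihilation estimate: for independent exponentials `E_i` of rate `4i` and fixed
`T > 0`, `r ∈ (1/2,1)`, there are `c > 0` and `n₀` such that for all `n ≥ n₀`, the
probability that `∑_{i=⌊n^r/2⌋}^{n} E_i < T` is at most `exp(-c n^r)`. -/
theorem annihilation_tail_estimate {Ω : Type*} [MeasurableSpace Ω]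
    (μ : Measure Ω) [IsProbabilityMeasure μ] (T r : ℝ) (hT : 0 < T)
    (hr : r ∈ Set.Ioo (1/2 : ℝ) 1)
    (E : ℕ → Ω → ℝ) (hmeas : ∀ i, Measurable (E i))
    (hindep : iIndepFun E μ)
    (hlaw : ∀ i : ℕ, 1 ≤ i → μ.map (E i) = expMeasure (4 * i)) :
    ∃ c > (0:ℝ), ∃ n₀ : ℕ, ∀ n : ℕ, n₀ ≤ n →
      μ {ω | ∑ i ∈ Finset.Icc ⌊(n : ℝ) ^ r / 2⌋₊ n, E i ω < T}
        ≤ ENNReal.ofReal (Real.exp (-c * (n : ℝ) ^ r)) := by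
  obtain ⟨hr1, hr2⟩ := hr
  -- eventual conditions
  have hev1 : ∀ᶠ n : ℕ in Filter.atTop, (4:ℝ) ≤ (n:ℝ) ^ r := by
    have : Filter.Tendsto (fun n : ℕ => (n:ℝ) ^ r) Filter.atTop Filter.atTop :=
      (tendsto_rpow_atTop (by linarith)).comp tendsto_natCast_atTop_atTop
    exact this.eventually_ge_atTop 4
  have hev2 : ∀ᶠ n : ℕ in Filter.atTop, 8 * T + 8 ≤ (1 - r) * Real.log n := by
    have hlog : Filter.Tendsto (fun n : ℕ => Real.log n) Filter.atTop Filter.atTop :=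
      Real.tendsto_log_atTop.comp tendsto_natCast_atTop_atTop
    filter_upwards [hlog.eventually_ge_atTop ((8 * T + 8) / (1 - r))] with n hn
    rw [div_le_iff₀ (by linarith)] at hn
    linarith
  have hev3 : ∀ᶠ n : ℕ in Filter.atTop, 1 ≤ n := Filter.eventually_ge_atTop 1
  obtain ⟨n₀, hn₀⟩ := Filter.eventually_atTop.1 ((hev1.and hev2).and hev3)
  refine ⟨1, one_pos, n₀, fun n hn => ?_⟩
  obtain ⟨⟨h4s, hTlog⟩, hn1⟩ := hn₀ n hn
  set s : ℝ := (n:ℝ) ^ r with hs_def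
  set m : ℕ := ⌊s / 2⌋₊ with hm_def
  have hs0 : 0 < s := by linarith
  have hn0R : (1:ℝ) ≤ (n:ℝ) := by exact_mod_cast hn1
  have hm1 : 1 ≤ m := Nat.le_floor (by push_cast; linarith)
  have hmn : m ≤ n := by
    have h1 : s ≤ (n:ℝ) := by
      rw [hs_def]
      calc (n:ℝ) ^ r ≤ (n:ℝ) ^ (1:ℝ) :=
            Real.rpow_le_rpow_of_exponent_le hn0R (by linarith)
        _ = (n:ℝ) := Real.rpow_one _
    calc m ≤ ⌊(n:ℝ)⌋₊ := Nat.floor_le_floor (by linarith)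
      _ = n := Nat.floor_natCast n
  have hs4m : s ≤ 4 * (m:ℝ) := by
    have := Nat.lt_floor_add_one (s / 2)
    have hm : s / 2 < (m:ℝ) + 1 := by exact_mod_cast this
    linarith
  -- basic facts about each i in the range
  have hi_pos : ∀ i ∈ Finset.Icc m n, (0:ℝ) < 4 * i := fun i hi => by
    have : 1 ≤ i := le_trans hm1 (Finset.mem_Icc.1 hi).1
    have : (1:ℝ) ≤ i := by exact_mod_cast this
    linarith
  have hi_s : ∀ i ∈ Finset.Icc m n, s ≤ 4 * (i:ℝ) := fun i hi => by
    have : m ≤ i := (Finset.mem_Icc.1 hi).1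
    have : (m:ℝ) ≤ i := by exact_mod_cast this
    linarith
  have hlaw' : ∀ i ∈ Finset.Icc m n, μ.map (E i) = expMeasure (4 * i) := fun i hi =>
    hlaw i (le_trans hm1 (Finset.mem_Icc.1 hi).1)
  -- integrability
  have hInt : ∀ i ∈ Finset.Icc m n, Integrable (fun ω => Real.exp (-s * E i ω)) μ :=
    fun i hi => integrable_exp_neg μ (E i) (hmeas i) hs0.le
      (ae_nonneg_of_expMeasure μ (E i) (hmeas i) (hlaw' i hi))
  have hIntS : Integrable (fun ω => Real.exp (-s * (∑ i ∈ Finset.Icc m n, E i) ω)) μ :=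
    hindep.integrable_exp_mul_sum hmeas hInt
  -- Chernoff
  have hcher := measure_le_le_exp_mul_mgf (μ := μ)
    (X := ∑ i ∈ Finset.Icc m n, E i) T (neg_nonpos.2 hs0.le) hIntS
  -- mgf product and bound
  have hmgf : mgf (∑ i ∈ Finset.Icc m n, E i) μ (-s)
      = ∏ i ∈ Finset.Icc m n, mgf (E i) μ (-s) := hindep.mgf_sum hmeas _
  have hmgf_i : ∀ i ∈ Finset.Icc m n, mgf (E i) μ (-s) = 4 * (i:ℝ) / (4 * i + s) :=
    fun i hi => mgf_expMeasure μ (E i) (hmeas i) (hi_pos i hi) hs0.le (hlaw' i hi)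
  have hprod_le : ∏ i ∈ Finset.Icc m n, mgf (E i) μ (-s)
      ≤ ∏ i ∈ Finset.Icc m n, Real.exp (-(s / (8 * i))) := by
    apply Finset.prod_le_prod
    · intro i hi
      rw [hmgf_i i hi]
      have := hi_pos i hi
      positivity
    · intro i hi
      rw [hmgf_i i hi]
      have h := ratio_le_exp (hi_pos i hi) hs0.le (hi_s i hi)
      have heq : 2 * (4 * (i:ℝ)) = 8 * i := by ring
      rw [heq] at h
      exact h
  have hsum : ∏ i ∈ Finset.Icc m n, Real.exp (-(s / (8 * i)))
      = Real.exp (∑ i ∈ Finset.Icc m n, -(s / (8 * i))) := (Real.exp_sum _ _).symm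
  -- harmonic bound
  have hharm := harmonic_lb m hm1 n hmn
  have hsum_ge : (s / 8) * (Real.log (n + 1) - Real.log m)
      ≤ ∑ i ∈ Finset.Icc m n, s / (8 * i) := by
    have : ∑ i ∈ Finset.Icc m n, s / (8 * i)
        = (s / 8) * ∑ i ∈ Finset.Icc m n, (1:ℝ) / i := by
      rw [Finset.mul_sum]
      apply Finset.sum_congr rfl
      intro i hi
      field_simp
    rw [this]
    apply mul_le_mul_of_nonneg_left hharm (by positivity)
  -- log bound
  have hlogm : Real.log m ≤ r * Real.log n := by
    have h1 : (m:ℝ) ≤ s := by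
      have := Nat.floor_le (by positivity : (0:ℝ) ≤ s / 2)
      linarith
    calc Real.log m ≤ Real.log s := Real.log_le_log (by exact_mod_cast hm1) h1
      _ = r * Real.log n := Real.log_rpow (by linarith) r
  have hlogn : Real.log n ≤ Real.log (n + 1) :=
    Real.log_le_log (by linarith) (by linarith)
  have hL : 8 * T + 8 ≤ Real.log (n + 1) - Real.log m := by
    have : (1 - r) * Real.log n ≤ Real.log (n + 1) - Real.log m := by nlinarith
    linarith
  -- final exponent comparison
  have hlogn0 : 0 ≤ Real.log n := Real.log_nonneg hn0R
  have hfinal : Real.exp (-(-s) * T) *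
      Real.exp (∑ i ∈ Finset.Icc m n, -(s / (8 * i))) ≤ Real.exp (-1 * (n:ℝ) ^ r) := by
    rw [← Real.exp_add]
    apply Real.exp_le_exp.2
    have hsum' : ∑ i ∈ Finset.Icc m n, -(s / (8 * i))
        ≤ -((s / 8) * (Real.log (n + 1) - Real.log m)) := by
      rw [Finset.sum_neg_distrib]
      linarith
    have hL' : (s / 8) * (8 * T + 8) ≤ (s / 8) * (Real.log (n + 1) - Real.log m) :=
      mul_le_mul_of_nonneg_left hL (by positivity)
    have : -(-s) * T = s * T := by ring
    rw [this]
    nlinarith [hsum', hL']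
  -- assemble
  calc μ {ω | ∑ i ∈ Finset.Icc m n, E i ω < T}
      ≤ μ {ω | (∑ i ∈ Finset.Icc m n, E i) ω ≤ T} := by
        apply measure_mono
        intro ω hω
        simp only [Set.mem_setOf_eq, Finset.sum_apply]
        exact le_of_lt hω
    _ = ENNReal.ofReal ((μ {ω | (∑ i ∈ Finset.Icc m n, E i) ω ≤ T}).toReal) :=
        (ENNReal.ofReal_toReal (measure_ne_top μ _)).symm
    _ ≤ ENNReal.ofReal (Real.exp (-1 * (n:ℝ) ^ r)) := by
        apply ENNReal.ofReal_le_ofReal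
        refine le_trans hcher ?_
        refine le_trans ?_ hfinal
        rw [hmgf]
        apply mul_le_mul_of_nonneg_left _ (Real.exp_pos _).le
        rw [hsum] at hprod_le
        exact hprod_le
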